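/- Let K ≥ 1 be a natural number and let t be a natural number with t ≥ 10K⁴. Then for every integer s with ⌈√t⌉ ≤ s ≤ t one has √(s + K²) − 2K > 0, and moreover Σ_{s=⌈√t⌉}^{t} 1/(√(s + K²) − 2K) ≤ 8√t + 8K·log t. -/

import Mathlib

open Real

private lemma sqrt_pos_lem (K s : ℕ) (hK : 1 ≤ K) (hs : 3 * K ^ 2 + 1 ≤ s) :
    0 < Real.sqrt ((s : ℝ) + (K : ℝ) ^ 2) - 2 * (K : ℝ) := by
  have hK1 : (1 : ℝ) ≤ K := by exact_mod_cast hK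
  have hs' : 3 * (K : ℝ) ^ 2 + 1 ≤ s := by exact_mod_cast hs
  have : 2 * (K : ℝ) < Real.sqrt ((s : ℝ) + (K : ℝ) ^ 2) :=
    (Real.lt_sqrt (by positivity)).mpr (by nlinarith)
  linarith

private lemma key_lem (K s : ℕ) (hK : 1 ≤ K) (hs : 3 * K ^ 2 + 1 ≤ s) :
    1 / (Real.sqrt ((s : ℝ) + (K : ℝ) ^ 2) - 2 * (K : ℝ)) ≤
      1 / Real.sqrt s + 5 * (K : ℝ) * (1 / ((s : ℝ) - 3 * (K : ℝ) ^ 2)) := by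
  have hK1 : (1 : ℝ) ≤ K := by exact_mod_cast hK
  have hs' : 3 * (K : ℝ) ^ 2 + 1 ≤ s := by exact_mod_cast hs
  have hS0 : (0 : ℝ) < s := by nlinarith
  have hD : (0 : ℝ) < (s : ℝ) - 3 * (K : ℝ) ^ 2 := by nlinarith
  have hx : 0 < Real.sqrt s := Real.sqrt_pos.mpr hS0
  have hxsq : Real.sqrt s ^ 2 = (s : ℝ) := Real.sq_sqrt hS0.le
  have hu0 : (0 : ℝ) ≤ (s : ℝ) + (K : ℝ) ^ 2 := by positivity
  have husq : Real.sqrt ((s : ℝ) + (K : ℝ) ^ 2) ^ 2 = (s : ℝ) + (K : ℝ) ^ 2 :=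
    Real.sq_sqrt hu0
  have hd : 0 < Real.sqrt ((s : ℝ) + (K : ℝ) ^ 2) - 2 * (K : ℝ) := sqrt_pos_lem K s hK hs
  have hu_le : Real.sqrt ((s : ℝ) + (K : ℝ) ^ 2) ≤ Real.sqrt s + K := by
    have h1 : (s : ℝ) + (K : ℝ) ^ 2 ≤ (Real.sqrt s + K) ^ 2 := by nlinarith [hx.le]
    calc Real.sqrt ((s : ℝ) + (K : ℝ) ^ 2) ≤ Real.sqrt ((Real.sqrt s + K) ^ 2) :=
          Real.sqrt_le_sqrt h1
      _ = Real.sqrt s + K := Real.sqrt_sq (by positivity)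
  have hxp : (0 : ℝ) < Real.sqrt s + 3 * (K : ℝ) / 2 := by linarith
  have hx32 : 3 * (K : ℝ) / 2 ≤ Real.sqrt s := by nlinarith [hxsq, hs', hxp, hK1]
  have hid : 1 / (Real.sqrt ((s : ℝ) + (K : ℝ) ^ 2) - 2 * (K : ℝ)) =
      (Real.sqrt ((s : ℝ) + (K : ℝ) ^ 2) + 2 * (K : ℝ)) / ((s : ℝ) - 3 * (K : ℝ) ^ 2) := by
    rw [div_eq_div_iff hd.ne' hD.ne']
    linear_combination -husq
  rw [hid]
  have hrhs : 1 / Real.sqrt s + 5 * (K : ℝ) * (1 / ((s : ℝ) - 3 * (K : ℝ) ^ 2)) =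
      (((s : ℝ) - 3 * (K : ℝ) ^ 2) + 5 * (K : ℝ) * Real.sqrt s) /
        (Real.sqrt s * ((s : ℝ) - 3 * (K : ℝ) ^ 2)) := by
    field_simp
    rw [one_add_div (ne_of_gt (by linarith))]
  rw [hrhs, div_le_div_iff₀ hD (mul_pos hx hD)]
  have h1 : (Real.sqrt ((s : ℝ) + (K : ℝ) ^ 2) + 2 * (K : ℝ)) * Real.sqrt s ≤
      ((s : ℝ) - 3 * (K : ℝ) ^ 2) + 5 * (K : ℝ) * Real.sqrt s := by
    nlinarith [mul_le_mul_of_nonneg_right hu_le hx.le,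
      mul_le_mul_of_nonneg_left hx32 (by linarith : (0:ℝ) ≤ (K:ℝ)), hxsq]
  nlinarith [mul_le_mul_of_nonneg_right h1 hD.le]

private lemma sqrt_sum_lem (a : ℕ) : ∀ t : ℕ,
    ∑ s ∈ Finset.Icc a t, 1 / Real.sqrt s ≤ 2 * Real.sqrt t := by
  intro t
  induction t with
  | zero =>
    rcases Nat.eq_zero_or_pos a with h | h
    · subst h; simp
    · rw [Finset.Icc_eq_empty (by omega)]; simp
  | succ t ih =>
    by_cases h : a ≤ t + 1
    · rw [Finset.sum_Icc_succ_top h]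
      have hx : 0 < Real.sqrt ((t : ℝ) + 1) := Real.sqrt_pos.mpr (by positivity)
      have hxsq : Real.sqrt ((t : ℝ) + 1) ^ 2 = (t : ℝ) + 1 := Real.sq_sqrt (by positivity)
      have hy : 0 ≤ Real.sqrt t := Real.sqrt_nonneg _
      have hysq : Real.sqrt (t : ℝ) ^ 2 = (t : ℝ) := Real.sq_sqrt (by positivity)
      have step : 1 / Real.sqrt ((t : ℝ) + 1) ≤ 2 * Real.sqrt ((t:ℝ) + 1) - 2 * Real.sqrt t := by
        rw [div_le_iff₀ hx]
        nlinarith [hxsq, hysq, hx, hy]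
      push_cast
      linarith [ih, step]
    · rw [Finset.Icc_eq_empty (by omega)]
      simp [Real.sqrt_nonneg]

private lemma harm_lem : ∀ t : ℕ, ∑ j ∈ Finset.Icc 1 t, 1 / (j : ℝ) ≤ 1 + Real.log t := by
  intro t
  induction t with
  | zero => simp
  | succ t ih =>
    rw [Finset.sum_Icc_succ_top (by omega)]
    rcases Nat.eq_zero_or_pos t with h | h
    · subst h; simp
    · have ht0 : (0 : ℝ) < t := by exact_mod_cast h
      have hstep : 1 / ((t : ℝ) + 1) ≤ Real.log ((t : ℝ) + 1) - Real.log t := by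
        have hlog : Real.log ((t:ℝ) / ((t:ℝ) + 1)) ≤ (t:ℝ) / ((t:ℝ)+1) - 1 :=
          Real.log_le_sub_one_of_pos (by positivity)
        rw [Real.log_div (by positivity) (by positivity)] at hlog
        have : (t:ℝ) / ((t:ℝ)+1) - 1 = -(1 / ((t:ℝ)+1)) := by field_simp; ring
        rw [this] at hlog
        linarith
      push_cast
      push_cast at ih
      linarith

/-- For `K ≥ 1` and `t ≥ 10K⁴`, every integer `s` with `⌈√t⌉ ≤ s ≤ t` satisfies
`√(s + K²) − 2K > 0`, and `∑_{s=⌈√t⌉}^{t} 1/(√(s + K²) − 2K) ≤ 8√t + 8K log t`. -/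
theorem sum_inv_sqrt_shift_le (K t : ℕ) (hK : 1 ≤ K) (ht : 10 * K ^ 4 ≤ t) :
    (∀ s ∈ Finset.Icc ⌈Real.sqrt (t : ℝ)⌉₊ t,
        0 < Real.sqrt ((s : ℝ) + (K : ℝ) ^ 2) - 2 * (K : ℝ)) ∧
    ∑ s ∈ Finset.Icc ⌈Real.sqrt (t : ℝ)⌉₊ t,
        1 / (Real.sqrt ((s : ℝ) + (K : ℝ) ^ 2) - 2 * (K : ℝ)) ≤
      8 * Real.sqrt (t : ℝ) + 8 * (K : ℝ) * Real.log (t : ℝ) := by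
  have hK1 : (1 : ℝ) ≤ K := by exact_mod_cast hK
  have ht' : (10 : ℝ) * (K : ℝ) ^ 4 ≤ t := by exact_mod_cast ht
  have hK2 : (1 : ℝ) ≤ (K : ℝ) ^ 2 := by nlinarith
  have hK4 : (1 : ℝ) ≤ (K : ℝ) ^ 4 := by nlinarith
  have hta : 3 * K ^ 2 < ⌈Real.sqrt (t : ℝ)⌉₊ := by
    apply Nat.lt_ceil.mpr
    have h3 : ((3 * K ^ 2 : ℕ) : ℝ) = 3 * (K : ℝ) ^ 2 := by push_cast; ring
    rw [h3]
    exact (Real.lt_sqrt (by positivity)).mpr (by nlinarith)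
  have hmem : ∀ s ∈ Finset.Icc ⌈Real.sqrt (t : ℝ)⌉₊ t, 3 * K ^ 2 + 1 ≤ s := by
    intro s hs
    have := (Finset.mem_Icc.mp hs).1
    omega
  constructor
  · intro s hs
    exact sqrt_pos_lem K s hK (hmem s hs)
  · set g : ℕ → ℝ := fun s => 1 / ((s : ℝ) - 3 * (K : ℝ) ^ 2) with hg
    have hsum1 : ∑ s ∈ Finset.Icc ⌈Real.sqrt (t : ℝ)⌉₊ t,
        1 / (Real.sqrt ((s : ℝ) + (K : ℝ) ^ 2) - 2 * (K : ℝ)) ≤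
        ∑ s ∈ Finset.Icc ⌈Real.sqrt (t : ℝ)⌉₊ t,
          (1 / Real.sqrt s + 5 * (K : ℝ) * g s) :=
      Finset.sum_le_sum (fun s hs => key_lem K s hK (hmem s hs))
    have hsplit : ∑ s ∈ Finset.Icc ⌈Real.sqrt (t : ℝ)⌉₊ t,
        (1 / Real.sqrt s + 5 * (K : ℝ) * g s) =
        (∑ s ∈ Finset.Icc ⌈Real.sqrt (t : ℝ)⌉₊ t, 1 / Real.sqrt s) +
        5 * (K : ℝ) * ∑ s ∈ Finset.Icc ⌈Real.sqrt (t : ℝ)⌉₊ t, g s := by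
      rw [Finset.sum_add_distrib, Finset.mul_sum]
    have hharm : ∑ s ∈ Finset.Icc ⌈Real.sqrt (t : ℝ)⌉₊ t, g s ≤ 1 + Real.log t := by
      have hsub : ∑ s ∈ Finset.Icc ⌈Real.sqrt (t : ℝ)⌉₊ t, g s ≤
          ∑ s ∈ Finset.Icc (3 * K ^ 2 + 1) (3 * K ^ 2 + t), g s := by
        apply Finset.sum_le_sum_of_subset_of_nonneg
        · exact Finset.Icc_subset_Icc (by omega) (by omega)
        · intro i hi _
          have hi1 : 3 * K ^ 2 + 1 ≤ i := (Finset.mem_Icc.mp hi).1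
          have hi2 : (3 : ℝ) * (K : ℝ) ^ 2 + 1 ≤ i := by exact_mod_cast hi1
          have : (0 : ℝ) < (i : ℝ) - 3 * (K : ℝ) ^ 2 := by linarith
          simp only [hg]
          positivity
      have hmap : ∑ s ∈ Finset.Icc (3 * K ^ 2 + 1) (3 * K ^ 2 + t), g s =
          ∑ j ∈ Finset.Icc 1 t, 1 / (j : ℝ) := by
        rw [← Finset.map_add_left_Icc 1 t (3 * K ^ 2), Finset.sum_map]
        apply Finset.sum_congr rfl
        intro j hj
        simp only [addLeftEmbedding_apply, hg]
        have hj1 : 1 ≤ j := (Finset.mem_Icc.mp hj).1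
        push_cast
        ring_nf
      calc ∑ s ∈ Finset.Icc ⌈Real.sqrt (t : ℝ)⌉₊ t, g s ≤ _ := hsub
        _ = _ := hmap
        _ ≤ 1 + Real.log t := harm_lem t
    have hsq : ∑ s ∈ Finset.Icc ⌈Real.sqrt (t : ℝ)⌉₊ t, 1 / Real.sqrt s ≤
        2 * Real.sqrt t := sqrt_sum_lem _ t
    have hKt : (K : ℝ) ≤ Real.sqrt t := by
      rw [show ((K:ℝ)) = Real.sqrt ((K:ℝ)^2) by rw [Real.sqrt_sq (by positivity)]]
      apply Real.sqrt_le_sqrt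
      nlinarith
    have hlog0 : 0 ≤ Real.log t := Real.log_nonneg (by linarith)
    calc ∑ s ∈ Finset.Icc ⌈Real.sqrt (t : ℝ)⌉₊ t,
        1 / (Real.sqrt ((s : ℝ) + (K : ℝ) ^ 2) - 2 * (K : ℝ)) ≤ _ := hsum1
      _ = _ := hsplit
      _ ≤ 2 * Real.sqrt t + 5 * (K : ℝ) * (1 + Real.log t) := by
          have h5 : (0:ℝ) ≤ 5 * (K:ℝ) := by positivity
          have := mul_le_mul_of_nonneg_left hharm h5
          linarith
      _ ≤ 8 * Real.sqrt (t : ℝ) + 8 * (K : ℝ) * Real.log (t : ℝ) := by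
          nlinarith [mul_nonneg (by positivity : (0:ℝ) ≤ 3 * (K:ℝ)) hlog0]
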